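/- Let G be a nontrivial finite group, s ∈ G, and suppose that M is the unique maximal subgroup of G containing s (that is, M is maximal, s ∈ M, and every maximal subgroup of G containing s equals M). Let x₁, …, x_k ∈ G. Then there exists a conjugate s' of s with ⟨x_i, s'⟩ = G for all 1 ≤ i ≤ k if and only if the fixed-point sets of x₁, …, x_k on G/M do not cover G/M, i.e., there is a left coset y ∈ G/M with x_i·y ≠ y for all i. -/
import Mathlib


/-- Let `G` be a nontrivial finite group, `s ∈ G`, and `M` the unique maximal subgroup
of `G` containing `s`. For `x₁, …, x_k ∈ G`, there is a conjugate `s'` of `s` with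
`⟨x i, s'⟩ = G` for all `i` if and only if the fixed-point sets of the `x i` on `G ⧸ M`
do not cover `G ⧸ M`. -/
theorem stmt_5 {G : Type*} [Group G] [Fintype G] [Nontrivial G]
    (s : G) (M : Subgroup G) (hmax : IsCoatom M) (hs : s ∈ M)
    (huniq : ∀ N : Subgroup G, IsCoatom N → s ∈ N → N = M)
    (k : ℕ) (x : Fin k → G) :
    (∃ c : G, ∀ i, Subgroup.closure {x i, c⁻¹ * s * c} = ⊤) ↔
      ∃ y : G ⧸ M, ∀ i, x i • y ≠ y := by
  -- the conjugate subgroup c⁻¹ M c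
  set N : G → Subgroup G := fun c => M.comap ((MulAut.conj c : G ≃* G) : G →* G) with hN
  have hNmem : ∀ c g : G, g ∈ N c ↔ c * g * c⁻¹ ∈ M := by
    intro c g
    simp [hN, Subgroup.mem_comap, MulAut.conj_apply]
  have hNcoatom : ∀ c : G, IsCoatom (N c) := fun c =>
    (Subgroup.isCoatom_comap (MulAut.conj c)).mpr hmax
  have hsN : ∀ c : G, c⁻¹ * s * c ∈ N c := by
    intro c
    rw [hNmem]
    have : c * (c⁻¹ * s * c) * c⁻¹ = s := by group
    rwa [this]
  have key : ∀ c g : G, Subgroup.closure {g, c⁻¹ * s * c} = ⊤ ↔ c * g * c⁻¹ ∉ M := by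
    intro c g
    constructor
    · intro h hg
      have hsub : Subgroup.closure {g, c⁻¹ * s * c} ≤ N c := by
        apply Subgroup.closure_le _ |>.mpr
        intro z hz
        simp only [Set.mem_insert_iff, Set.mem_singleton_iff] at hz
        rcases hz with rfl | rfl
        · exact (hNmem c z).mpr hg
        · exact hsN c
      rw [h] at hsub
      exact (hNcoatom c).1 (top_le_iff.mp hsub)
    · intro hg
      by_contra h
      obtain ⟨K, hK, hle⟩ :=
        (eq_top_or_exists_le_coatom (Subgroup.closure {g, c⁻¹ * s * c})).resolve_left h
      -- K is a coatom containing c⁻¹ s c, so K = N c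
      have hsK : c⁻¹ * s * c ∈ K :=
        hle (Subgroup.subset_closure (by simp))
      have hgK : g ∈ K := hle (Subgroup.subset_closure (by simp))
      -- transport K back: K.comap (conj c⁻¹) is a coatom containing s
      have hK' : IsCoatom (K.comap ((MulAut.conj c⁻¹ : G ≃* G) : G →* G)) :=
        (Subgroup.isCoatom_comap (MulAut.conj c⁻¹)).mpr hK
      have hsK' : s ∈ K.comap ((MulAut.conj c⁻¹ : G ≃* G) : G →* G) := by
        simp only [Subgroup.mem_comap, MulAut.conj_apply, MonoidHom.coe_coe, MulEquiv.coe_mk,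
          inv_inv]
        exact hsK
      have hKM := huniq _ hK' hsK'
      apply hg
      have : c * g * c⁻¹ ∈ K.comap ((MulAut.conj c⁻¹ : G ≃* G) : G →* G) := by
        simp only [Subgroup.mem_comap, MulAut.conj_apply, MonoidHom.coe_coe, inv_inv]
        have h2 : c⁻¹ * (c * g * c⁻¹) * c = g := by group
        rwa [h2]
      rwa [hKM] at this
  have fix : ∀ c g : G, g • ((c⁻¹ : G) : G ⧸ M) = ((c⁻¹ : G) : G ⧸ M) ↔ c * g * c⁻¹ ∈ M := by
    intro c g
    rw [MulAction.Quotient.smul_coe, QuotientGroup.eq]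
    constructor
    · intro h
      have := M.inv_mem h
      simpa [mul_assoc] using this
    · intro h
      have := M.inv_mem h
      simpa [mul_assoc] using this
  constructor
  · rintro ⟨c, hc⟩
    refine ⟨((c⁻¹ : G) : G ⧸ M), fun i => ?_⟩
    rw [Ne, fix]
    exact (key c (x i)).mp (hc i)
  · rintro ⟨y, hy⟩
    induction y using QuotientGroup.induction_on with
    | H a =>
      refine ⟨a⁻¹, fun i => ?_⟩
      rw [key]
      have := hy i
      rw [Ne] at this
      have ha : ((a⁻¹ : G)⁻¹ : G) = a := by simp
      intro hmem
      apply this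
      have := (fix a⁻¹ (x i)).mpr hmem
      simpa using this
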